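/- If the abstract actions A_F are sound relative to a generalized problem Q, I_F holds in the abstract state of the initial state of every instance P ∈ Q whose initial state satisfies I_F and whose goal G satisfies G_F ⊨ G, and π is a policy over abstract states such that every π-induced abstract execution from any abstract state satisfying I_F reaches an abstract state satisfying G_F in finitely many steps (π 'solves' the abstraction under conditionally-fair semantics), then every concrete trajectory induced by π in such an instance P reaches a goal state of P; i.e., π solves P. -/
import Mathlib


inductive Change
  | inc | dec | same
deriving DecidableEq

def delta (v v' : ℕ) : Change := if v < v' then .inc else if v' < v then .dec else .same

structure PInstance (State Action : Type) where
  init : State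
  applicable : State → Action → Prop
  succ : State → Action → State
  goal : State → Prop

inductive Reachable {State Action : Type} (P : PInstance State Action) : State → Prop
  | init : Reachable P P.init
  | step {s a} : Reachable P s → P.applicable s a → Reachable P (P.succ s a)

structure AbsAction (F : Type) where
  pre : F → Option Bool
  eff : F → Change

def absOf {State F : Type} (val : F → State → ℕ) (s : State) : F → Bool :=
  fun f => decide (val f s = 0)

def AppAbs {F : Type} (b : F → Bool) (a : AbsAction F) : Prop :=
  ∀ (f : F) (c : Bool), a.pre f = some c → b f = c

def SameEff {State F : Type} (val : F → State → ℕ) (a : AbsAction F) (s s' : State) : Prop :=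
  ∀ f, a.eff f = delta (val f s) (val f s')

def Instantiates {State Action F : Type} (val : F → State → ℕ) (P : PInstance State Action)
    (act : Action) (a : AbsAction F) (s : State) : Prop :=
  P.applicable s act ∧ AppAbs (absOf val s) a ∧ SameEff val a s (P.succ s act)

def SoundQ {State Action F : Type} (Q : Set (PInstance State Action))
    (val : F → State → ℕ) (A : Set (AbsAction F)) : Prop :=
  ∀ P ∈ Q, ∀ s, Reachable P s → ∀ a ∈ A, AppAbs (absOf val s) a →
    ∃ act, Instantiates val P act a s

def CompleteQ {State Action F : Type} (Q : Set (PInstance State Action))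
    (val : F → State → ℕ) (A : Set (AbsAction F)) : Prop :=
  ∀ P ∈ Q, ∀ s, Reachable P s → ∀ act, P.applicable s act →
    ∃ a ∈ A, AppAbs (absOf val s) a ∧ SameEff val a s (P.succ s act)

def IsSample {State Action : Type} (Q : Set (PInstance State Action))
    (S : Set (State × State × PInstance State Action)) : Prop :=
  S.Nonempty ∧
  (∀ x ∈ S, x.2.2 ∈ Q ∧ Reachable x.2.2 x.1 ∧
    ∃ a, x.2.2.applicable x.1 a ∧ x.2.1 = x.2.2.succ x.1 a) ∧
  (∀ x ∈ S, ∀ a, x.2.2.applicable x.1 a → (x.1, x.2.2.succ x.1 a, x.2.2) ∈ S)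

def SoundS {State Action F : Type} (val : F → State → ℕ) (A : Set (AbsAction F))
    (S : Set (State × State × PInstance State Action)) : Prop :=
  ∀ x ∈ S, ∀ a ∈ A, AppAbs (absOf val x.1) a →
    ∃ s'', (x.1, s'', x.2.2) ∈ S ∧ SameEff val a x.1 s''

def CompleteS {State Action F : Type} (val : F → State → ℕ) (A : Set (AbsAction F))
    (S : Set (State × State × PInstance State Action)) : Prop :=
  ∀ x ∈ S, ∃ a ∈ A, AppAbs (absOf val x.1) a ∧ SameEff val a x.1 x.2.1

/-- Abstract successor: applying the effects of `a` to abstract state `b` may yield `b'`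
(increments make the atom n=0 false, decrements are nondeterministic, untouched
features keep their value). -/
def AbsSucc {F : Type} (a : AbsAction F) (b b' : F → Bool) : Prop :=
  ∀ f, match a.eff f with
  | Change.inc => b' f = false
  | Change.dec => True
  | Change.same => b' f = b f

/-- Conditional fairness of an abstract execution: if a feature is decremented
infinitely often and incremented only finitely often, then its atom n=0 holds
infinitely often. -/
def FairAbs {F : Type} (b : ℕ → F → Bool) (acts : ℕ → AbsAction F) : Prop :=
  ∀ f, (∀ N, ∃ i ≥ N, (acts i).eff f = Change.dec) →
    (∃ N, ∀ i ≥ N, (acts i).eff f ≠ Change.inc) →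
    ∀ N, ∃ i ≥ N, b i f = true

/-- π solves the abstraction under conditionally-fair semantics: every conditionally
fair abstract execution of π from an abstract state satisfying I_F reaches an
abstract state satisfying G_F in finitely many steps. -/
def SolvesAbs {F : Type} (π : (F → Bool) → Option (AbsAction F))
    (IF GF : (F → Bool) → Prop) : Prop :=
  ∀ (b : ℕ → F → Bool) (acts : ℕ → AbsAction F),
    IF (b 0) →
    (∀ i, (∀ j ≤ i, ¬ GF (b j)) →
      π (b i) = some (acts i) ∧ AppAbs (b i) (acts i) ∧
        AbsSucc (acts i) (b i) (b (i+1))) →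
    FairAbs b acts →
    ∃ n, GF (b n)


lemma delta_inc {v v' : ℕ} (h : delta v v' = .inc) : v < v' := by
  unfold delta at h; split_ifs at h <;> simp_all

lemma delta_dec {v v' : ℕ} (h : delta v v' = .dec) : v' < v := by
  unfold delta at h; split_ifs at h <;> simp_all

lemma delta_same {v v' : ℕ} (h : delta v v' = .same) : v = v' := by
  unfold delta at h; split_ifs at h <;> simp_all <;> omega

/-- If A_F is sound relative to Q, the instance P ∈ Q satisfies
I ⊨ I_F and G_F ⊨ G, and the policy π solves the abstraction under conditionally
fair semantics, then every concrete trajectory induced by π in P reaches a goal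
state of P: π solves P. -/
theorem stmt11 {State Action F : Type} (Q : Set (PInstance State Action))
    (val : F → State → ℕ) (A : Set (AbsAction F)) (hsound : SoundQ Q val A)
    (π : (F → Bool) → Option (AbsAction F)) (hπA : ∀ b a, π b = some a → a ∈ A)
    (IF GF : (F → Bool) → Prop)
    (P : PInstance State Action) (hP : P ∈ Q)
    (hI : IF (absOf val P.init))
    (hG : ∀ s, Reachable P s → GF (absOf val s) → P.goal s)
    (hsolves : SolvesAbs π IF GF) :
    ∀ (s : ℕ → State) (acts : ℕ → Action), s 0 = P.init →
      (∀ i, (∀ j ≤ i, ¬ P.goal (s j)) →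
        ∃ a, π (absOf val (s i)) = some a ∧ Instantiates val P (acts i) a (s i) ∧
          s (i+1) = P.succ (s i) (acts i)) →
      ∃ n, P.goal (s n) := by
  intro s acts hs0 htraj
  by_contra hgoal
  push_neg at hgoal
  have hstep : ∀ i, ∃ a, π (absOf val (s i)) = some a ∧
      Instantiates val P (acts i) a (s i) ∧ s (i+1) = P.succ (s i) (acts i) :=
    fun i => htraj i (fun j _ => hgoal j)
  choose A' hpi hinst hsucc using hstep
  set b : ℕ → F → Bool := fun i => absOf val (s i) with hb
  have happ : ∀ i, AppAbs (b i) (A' i) := fun i => (hinst i).2.1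
  have heff : ∀ i f, (A' i).eff f = delta (val f (s i)) (val f (s (i+1))) := by
    intro i f
    have h := (hinst i).2.2 f
    rw [← hsucc i] at h
    exact h
  have habs : ∀ i, AbsSucc (A' i) (b i) (b (i+1)) := by
    intro i f
    have h := heff i f
    cases hc : (A' i).eff f <;> rw [hc] at h <;> simp only
    case inc =>
      have := delta_inc h.symm
      simp only [hb, absOf, decide_eq_false_iff_not]
      omega
    case same =>
      have := delta_same h.symm
      simp only [hb, absOf, this]
  have hfair : FairAbs b A' := by
    intro f hdec hinc _N
    exfalso
    obtain ⟨N, hN⟩ := hinc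
    set g : ℕ → ℕ := fun k => val f (s (N + k)) with hg
    have hmono : ∀ k, g (k+1) ≤ g k := by
      intro k
      have hne := hN (N + k) (Nat.le_add_right _ _)
      have h := heff (N + k) f
      cases hc : (A' (N + k)).eff f
      · exact absurd hc hne
      · rw [hc] at h; exact le_of_lt (delta_dec h.symm)
      · rw [hc] at h; exact le_of_eq (delta_same h.symm).symm
  
    have hganti : Antitone g := antitone_nat_of_succ_le hmono
    obtain ⟨k0, hk0⟩ := Nat.sInf_mem (⟨g 0, ⟨0, rfl⟩⟩ : (Set.range g).Nonempty)
    obtain ⟨i, hiN, hidec⟩ := hdec (N + k0)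
    obtain ⟨k, rfl⟩ : ∃ k, i = N + k := ⟨i - N, by omega⟩
    have hk0k : k0 ≤ k := by omega
    have h1 : g (k+1) < g k := by
      have h := heff (N + k) f
      rw [hidec] at h
      exact delta_dec h.symm
    have h2 : g k ≤ g k0 := hganti hk0k
    have h3 : sInf (Set.range g) ≤ g (k+1) := Nat.sInf_le ⟨k+1, rfl⟩
    omega
  have hreach : ∀ i, Reachable P (s i) := by
    intro i
    induction i with
    | zero => rw [hs0]; exact .init
    | succ n ih => rw [hsucc n]; exact .step ih (hinst n).1
  have hIF : IF (b 0) := by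
    simp only [hb, hs0]
    exact hI
  obtain ⟨n, hGFn⟩ := hsolves b A' hIF (fun i _ => ⟨hpi i, happ i, habs i⟩) hfair
  exact hgoal n (hG (s n) (hreach n) hGFn)
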